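/- Let t(n) := num_T(n,1) for n ≥ 1 and set t(0) := 1. Then t(3n) = t(3n+1) = t(3n+2) for every integer n ≥ 0, and t(3n) − t(3n−2) = 2^{2n}·t(n) for every integer n ≥ 1. -/

import Mathlib

open Polynomial Finset
open scoped Classical

noncomputable def terParts (n : ℕ) : Finset (Nat.Partition n) :=
  Finset.univ.filter (fun μ => ∀ i ∈ μ.parts, ∃ k : ℕ, i = 3 ^ k)

noncomputable def hT (n : ℕ) (μ : Nat.Partition n) : Polynomial ℤ :=
  ∏ k ∈ (Finset.range (n + 1)).filter (fun k => 3 ^ k ≤ n),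
    (1 + X ^ (3 ^ k)) ^ (n / 3 ^ k - μ.parts.count (3 ^ k))

def Kn (n : ℕ) : Finset ℕ := (Finset.range (n + 1)).filter (fun k => 3 ^ k ≤ n)

def Sn (n : ℕ) : ℕ := ∑ k ∈ Kn n, n / 3 ^ k

noncomputable def uT (n : ℕ) : ℤ := ∑ μ ∈ terParts n, 2 ^ (n - Multiset.card μ.parts)

lemma hT_eq (n : ℕ) (μ : Nat.Partition n) :
    hT n μ = ∏ k ∈ Kn n, (1 + X ^ (3 ^ k)) ^ (n / 3 ^ k - μ.parts.count (3 ^ k)) := rfl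

lemma parts_card_le (n : ℕ) (μ : Nat.Partition n) : Multiset.card μ.parts ≤ n := by
  have := Multiset.card_nsmul_le_sum (s := μ.parts) (a := 1) (fun x hx => μ.parts_pos hx)
  simpa [μ.parts_sum] using this

lemma count_le_div (n : ℕ) (μ : Nat.Partition n) (k : ℕ) :
    μ.parts.count (3 ^ k) ≤ n / 3 ^ k := by
  rw [Nat.le_div_iff_mul_le (pow_pos (by norm_num) k)]
  have hle : Multiset.replicate (μ.parts.count (3 ^ k)) (3 ^ k) ≤ μ.parts :=
    Multiset.le_count_iff_replicate_le.mp le_rfl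
  obtain ⟨u, hu⟩ := Multiset.le_iff_exists_add.mp hle
  have h2 : μ.parts.sum = μ.parts.count (3 ^ k) * 3 ^ k + u.sum := by
    conv_lhs => rw [hu]
    rw [Multiset.sum_add, Multiset.sum_replicate, smul_eq_mul]
  have h3 := μ.parts_sum
  omega

lemma mem_Kn_of_part {n : ℕ} {μ : Nat.Partition n} (hμ : μ ∈ terParts n)
    {i : ℕ} (hi : i ∈ μ.parts) : ∃ k ∈ Kn n, i = 3 ^ k := by
  obtain ⟨k, rfl⟩ := (Finset.mem_filter.mp hμ).2 i hi
  refine ⟨k, ?_, rfl⟩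
  have hle : 3 ^ k ≤ n := by
    calc 3 ^ k ≤ μ.parts.sum := Multiset.single_le_sum (fun x _ => Nat.zero_le x) _ hi
      _ = n := μ.parts_sum
  have hk : k < 3 ^ k := Nat.lt_pow_self (by norm_num)
  exact Finset.mem_filter.mpr ⟨Finset.mem_range.mpr (by omega), hle⟩

lemma sum_count_eq_card {n : ℕ} {μ : Nat.Partition n} (hμ : μ ∈ terParts n) :
    ∑ k ∈ Kn n, μ.parts.count (3 ^ k) = Multiset.card μ.parts := by
  rw [← Multiset.toFinset_sum_count_eq μ.parts]
  rw [← Finset.sum_image (f := fun a => μ.parts.count a)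
    (g := fun k : ℕ => 3 ^ k) (s := Kn n) (by
      intro x _ y _ h
      exact Nat.pow_right_injective (by norm_num) h)]
  refine (Finset.sum_subset ?_ ?_).symm
  · intro a ha
    obtain ⟨k, hk, rfl⟩ := mem_Kn_of_part hμ (Multiset.mem_toFinset.mp ha)
    exact Finset.mem_image.mpr ⟨k, hk, rfl⟩
  · intro a _ ha
    exact Multiset.count_eq_zero.mpr (fun h => ha (Multiset.mem_toFinset.mpr h))

/-- the all-ones partition -/
def onesPart (n : ℕ) : Nat.Partition n :=
  ⟨Multiset.replicate n 1, fun {i} h => by rw [Multiset.eq_of_mem_replicate h]; norm_num, by simp⟩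

lemma onesPart_mem (n : ℕ) : onesPart n ∈ terParts n := by
  refine Finset.mem_filter.mpr ⟨Finset.mem_univ _, fun i hi => ⟨0, ?_⟩⟩
  simpa using Multiset.eq_of_mem_replicate hi

lemma onesPart_card (n : ℕ) : Multiset.card (onesPart n).parts = n := by
  simp [onesPart]

lemma n_le_Sn (n : ℕ) : n ≤ Sn n := by
  rcases Nat.eq_zero_or_pos n with h | h
  · simp [h]
  · have h0 : 0 ∈ Kn n := Finset.mem_filter.mpr ⟨Finset.mem_range.mpr (by omega), by simpa using Nat.succ_le_of_lt h⟩
    calc n = n / 3 ^ 0 := by simp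
      _ ≤ ∑ k ∈ Kn n, n / 3 ^ k :=
        Finset.single_le_sum (f := fun k => n / 3 ^ k) (fun k _ => Nat.zero_le _) h0

lemma hT_eval_one {n : ℕ} {μ : Nat.Partition n} (hμ : μ ∈ terParts n) :
    (hT n μ).eval 1 = 2 ^ (Sn n - Multiset.card μ.parts) := by
  rw [hT_eq]
  rw [Polynomial.eval_prod]
  have : ∀ k ∈ Kn n, ((1 + X ^ 3 ^ k : Polynomial ℤ) ^ (n / 3 ^ k - μ.parts.count (3 ^ k))).eval 1
      = 2 ^ (n / 3 ^ k - μ.parts.count (3 ^ k)) := by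
    intro k _; simp
  rw [Finset.prod_congr rfl this, Finset.prod_pow_eq_pow_sum]
  congr 1
  rw [Finset.sum_tsub_distrib (s := Kn n) (fun k _ => count_le_div n μ k), sum_count_eq_card hμ]; rfl

noncomputable def GT (n : ℕ) : Polynomial ℤ :=
  (terParts n).gcd (hT n)

theorem GT_dvd_sum (n : ℕ) :
    ∃ q : Polynomial ℤ, (∑ μ ∈ terParts n, hT n μ) = GT n * q :=
  exists_eq_mul_right_of_dvd (Finset.dvd_sum fun _ hμ => Finset.gcd_dvd hμ)

noncomputable def numT (n : ℕ) : Polynomial ℤ :=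
  (GT_dvd_sum n).choose

noncomputable def tT : ℕ → ℤ :=
  fun n => if n = 0 then 1 else Polynomial.eval (1 : ℤ) (numT n)

lemma one_add_X_pow_dvd (m : ℕ) : (1 + X : Polynomial ℤ) ∣ (1 + X ^ 3 ^ m) := by
  have h := Odd.add_dvd_pow_add_pow (1 : Polynomial ℤ) X (n := 3 ^ m) (Odd.pow (by decide))
  simpa using h

lemma pow_dvd_hT {n : ℕ} {μ : Nat.Partition n} (hμ : μ ∈ terParts n) :
    (1 + X : Polynomial ℤ) ^ (Sn n - n) ∣ hT n μ := by
  have h1 : (1 + X : Polynomial ℤ) ^ (Sn n - Multiset.card μ.parts) ∣ hT n μ := by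
    rw [hT_eq]
    have : (∏ k ∈ Kn n, (1 + X : Polynomial ℤ) ^ (n / 3 ^ k - μ.parts.count (3 ^ k))) ∣
        ∏ k ∈ Kn n, (1 + X ^ 3 ^ k : Polynomial ℤ) ^ (n / 3 ^ k - μ.parts.count (3 ^ k)) :=
      Finset.prod_dvd_prod_of_dvd _ _ (fun k _ => pow_dvd_pow_of_dvd (one_add_X_pow_dvd k) _)
    rw [Finset.prod_pow_eq_pow_sum,
      Finset.sum_tsub_distrib (s := Kn n) (fun k _ => count_le_div n μ k),
      sum_count_eq_card hμ] at this
    exact this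
  exact dvd_trans (pow_dvd_pow _ (by have := parts_card_le n μ; omega)) h1

lemma pow_dvd_GT (n : ℕ) : (1 + X : Polynomial ℤ) ^ (Sn n - n) ∣ GT n :=
  Finset.dvd_gcd (fun μ hμ => pow_dvd_hT hμ)

lemma GT_eval_dvd (n : ℕ) : (GT n).eval 1 ∣ 2 ^ (Sn n - n) := by
  have h : GT n ∣ hT n (onesPart n) := Finset.gcd_dvd (onesPart_mem n)
  have h2 : (GT n).eval 1 ∣ (hT n (onesPart n)).eval 1 := by
    obtain ⟨c, hc⟩ := h
    exact ⟨c.eval 1, by rw [hc, Polynomial.eval_mul]⟩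
  rwa [hT_eval_one (onesPart_mem n), onesPart_card] at h2

lemma terParts_nonempty (n : ℕ) : (terParts n).Nonempty := ⟨onesPart n, onesPart_mem n⟩

lemma uT_pos (n : ℕ) : 0 < uT n :=
  Finset.sum_pos (fun μ _ => pow_pos (by norm_num) _) (terParts_nonempty n)

lemma sum_hT_eval (n : ℕ) :
    ∑ μ ∈ terParts n, (hT n μ).eval 1 = 2 ^ (Sn n - n) * uT n := by
  rw [uT, Finset.mul_sum]
  refine Finset.sum_congr rfl (fun μ hμ => ?_)
  rw [hT_eval_one hμ, ← pow_add]
  congr 1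
  have h1 := parts_card_le n μ
  have h2 := n_le_Sn n
  omega

lemma GT_mul_numT (n : ℕ) :
    2 ^ (Sn n - n) * uT n = (GT n).eval 1 * (numT n).eval 1 := by
  have hspec := (GT_dvd_sum n).choose_spec
  have := congrArg (Polynomial.eval (1 : ℤ)) hspec
  rw [Polynomial.eval_mul, Polynomial.eval_finset_sum] at this
  simp only [numT]
  rw [← this, sum_hT_eval]

lemma GT_eval_one_ne_zero (n : ℕ) : (GT n).eval 1 ≠ 0 := by
  intro h
  have := GT_mul_numT n
  rw [h, zero_mul] at this
  have h1 := uT_pos n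
  have h2 : (0:ℤ) < 2 ^ (Sn n - n) := pow_pos (by norm_num) _
  nlinarith

lemma GT_ne_zero (n : ℕ) : GT n ≠ 0 := by
  intro h
  exact GT_eval_one_ne_zero n (by rw [h]; simp)

lemma GT_leadingCoeff_pos (n : ℕ) : 0 < (GT n).leadingCoeff := by
  have hnorm : normalize (GT n) = GT n := Finset.normalize_gcd
  have h1 : (GT n).leadingCoeff = |(GT n).leadingCoeff| := by
    conv_lhs => rw [← hnorm]
    rw [Polynomial.leadingCoeff_normalize, ← Int.abs_eq_normalize]
  have h2 : (GT n).leadingCoeff ≠ 0 := Polynomial.leadingCoeff_ne_zero.mpr (GT_ne_zero n)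
  rw [h1]
  exact abs_pos.mpr h2

lemma eval_one_pos_of_real (p : Polynomial ℤ) (hlc : 0 < p.leadingCoeff)
    (h1 : p.eval 1 ≠ 0) (hroots : ∀ c : ℝ, 1 ≤ c → (Polynomial.aeval c) p ≠ 0) :
    0 < p.eval 1 := by
  set F : Polynomial ℝ := p.map (Int.castRingHom ℝ) with hF
  have hev : ∀ c : ℝ, F.eval c = (Polynomial.aeval c) p := by
    intro c; rw [hF, Polynomial.eval_map, Polynomial.aeval_def]; rfl
  have hev1 : F.eval 1 = ((p.eval 1 : ℤ) : ℝ) := by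
    rw [hF, Polynomial.eval_map, Polynomial.eval₂_at_one]; rfl
  suffices h : 0 < F.eval 1 by
    rw [hev1] at h; exact_mod_cast h
  have hlcF : F.leadingCoeff = ((p.leadingCoeff : ℤ) : ℝ) :=
    Polynomial.leadingCoeff_map_of_leadingCoeff_ne_zero _
      (by simpa using (Int.cast_ne_zero (α := ℝ)).mpr hlc.ne')
  have hlcFpos : 0 < F.leadingCoeff := by rw [hlcF]; exact_mod_cast hlc
  rcases le_or_gt F.degree 0 with hdeg | hdeg
  · -- constant polynomial
    have : F = Polynomial.C (F.coeff 0) := Polynomial.eq_C_of_degree_le_zero hdeg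
    have hc : F.coeff 0 = F.leadingCoeff := by
      rw [Polynomial.leadingCoeff, Polynomial.natDegree_eq_zero_iff_degree_le_zero.mpr hdeg]
    rw [this]; simpa [hc] using hlcFpos
  · have htend := Polynomial.tendsto_atTop_of_leadingCoeff_nonneg F hdeg hlcFpos.le
    obtain ⟨M, hM⟩ := ((htend.eventually_ge_atTop 1).and (Filter.eventually_ge_atTop (1:ℝ))).exists
    by_contra hcon
    push_neg at hcon
    have hne1 : F.eval 1 ≠ 0 := by rw [hev1]; exact_mod_cast h1
    have hlt : F.eval 1 < 0 := lt_of_le_of_ne hcon hne1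
    have hsub := intermediate_value_Icc hM.2 (F.continuous_aeval.continuousOn)
    have h0 : (0:ℝ) ∈ Set.Icc (F.eval 1) (F.eval M) := ⟨hlt.le, by linarith [hM.1]⟩
    obtain ⟨c, hc, hc0⟩ := hsub h0
    exact hroots c hc.1 (by rw [← hev c]; exact hc0)

lemma aeval_hT_pos (n : ℕ) (μ : Nat.Partition n) (c : ℝ) (hc : 1 ≤ c) :
    0 < (Polynomial.aeval c) (hT n μ) := by
  have hc0 : (0:ℝ) < c := by linarith
  rw [hT_eq, map_prod]
  refine Finset.prod_pos fun k _ => ?_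
  rw [map_pow, map_add, map_one, map_pow, Polynomial.aeval_X]
  positivity

lemma GT_eval_one (n : ℕ) : (GT n).eval 1 = 2 ^ (Sn n - n) := by
  obtain ⟨r, hr⟩ := pow_dvd_GT n
  have heq : (GT n).eval 1 = 2 ^ (Sn n - n) * r.eval 1 := by
    rw [hr, Polynomial.eval_mul]
    norm_num
  have hdvd : 2 ^ (Sn n - n) * r.eval 1 ∣ 2 ^ (Sn n - n) * 1 := by
    rw [mul_one, ← heq]; exact GT_eval_dvd n
  have hr1 : r.eval 1 ∣ 1 :=
    (mul_dvd_mul_iff_left (a := (2:ℤ) ^ (Sn n - n)) (by positivity)).mp hdvd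
  have hpos : 0 < (GT n).eval 1 := by
    refine eval_one_pos_of_real _ (GT_leadingCoeff_pos n) (GT_eval_one_ne_zero n) ?_
    intro c hc h0
    have hd : GT n ∣ hT n (onesPart n) := Finset.gcd_dvd (onesPart_mem n)
    obtain ⟨q, hq⟩ := hd
    have := aeval_hT_pos n (onesPart n) c hc
    rw [hq, map_mul, h0, zero_mul] at this
    exact lt_irrefl _ this
  rcases Int.isUnit_iff.mp (isUnit_of_dvd_one hr1) with h | h
  · rw [heq, h, mul_one]
  · rw [heq, h] at hpos
    have h2 : (0:ℤ) < 2 ^ (Sn n - n) := by positivity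
    nlinarith
  
lemma tT_eq_uT (n : ℕ) : tT n = uT n := by
  rcases Nat.eq_zero_or_pos n with rfl | hn
  · rw [tT]
    simp only [if_pos rfl]
    rw [uT]
    have hsub : ∀ μ ∈ terParts 0, μ = onesPart 0 := by
      intro μ _
      apply Nat.Partition.ext
      have h0 : μ.parts = 0 := by
        rw [Multiset.eq_zero_iff_forall_notMem]
        intro x hx
        have h1 := μ.parts_pos hx
        have h2 : x ≤ μ.parts.sum := Multiset.single_le_sum (fun y _ => Nat.zero_le y) _ hx
        rw [μ.parts_sum] at h2
        omega
      simp [h0, onesPart]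
    rw [Finset.eq_singleton_iff_unique_mem.mpr ⟨onesPart_mem 0, hsub⟩]
    simp
  · have h := GT_mul_numT n
    rw [GT_eval_one] at h
    have h2 : (0:ℤ) < 2 ^ (Sn n - n) := by positivity
    have := mul_left_cancel₀ h2.ne' h
    rw [tT, if_neg (by omega), ← this]

lemma count_one_mod {n : ℕ} {μ : Nat.Partition n} (hμ : μ ∈ terParts n) :
    μ.parts.count 1 % 3 = n % 3 := by
  have hsplit := Multiset.sum_filter_add_sum_filter_not (s := μ.parts) (fun x => 1 = x)
  have h1 : (μ.parts.filter (fun x => 1 = x)).sum = μ.parts.count 1 := by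
    have heq : μ.parts.filter (fun x => 1 = x) = Multiset.replicate (μ.parts.count 1) 1 :=
      Multiset.filter_eq μ.parts 1
    rw [heq, Multiset.sum_replicate, smul_eq_mul, mul_one]
  have h2 : 3 ∣ (μ.parts.filter (fun x => ¬ 1 = x)).sum := by
    refine Multiset.dvd_sum (fun x hx => ?_)
    obtain ⟨hx1, hx2⟩ := Multiset.mem_filter.mp hx
    obtain ⟨k, rfl⟩ := (Finset.mem_filter.mp hμ).2 x hx1
    have hk : k ≠ 0 := by rintro rfl; simp at hx2
    exact dvd_pow_self 3 hk
  rw [h1, μ.parts_sum] at hsplit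
  obtain ⟨t, ht⟩ := h2
  omega

lemma one_mem_parts {n : ℕ} {μ : Nat.Partition n} (hμ : μ ∈ terParts n) (h : n % 3 ≠ 0) :
    1 ∈ μ.parts := by
  have := count_one_mod hμ
  have : μ.parts.count 1 ≠ 0 := by omega
  exact Multiset.count_pos.mp (by omega)

/-- removing a part equal to 1 -/
lemma sum_filter_one_mem (N : ℕ) :
    ∑ μ ∈ (terParts (N + 1)).filter (fun μ => 1 ∈ μ.parts),
      (2:ℤ) ^ (N + 1 - Multiset.card μ.parts) = uT N := by
  rw [uT]
  refine Finset.sum_bij'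
    (i := fun μ hμ => ⟨μ.parts.erase 1,
      fun {i} hi => μ.parts_pos (Multiset.mem_of_mem_erase hi), ?_⟩)
    (j := fun ν hν => ⟨1 ::ₘ ν.parts,
      fun {i} hi => by
        rcases Multiset.mem_cons.mp hi with rfl | h
        · norm_num
        · exact ν.parts_pos h, by rw [Multiset.sum_cons, ν.parts_sum, add_comm]⟩)
    ?_ ?_ ?_ ?_ ?_
  · have h1 : 1 ∈ μ.parts := (Finset.mem_filter.mp hμ).2
    have := Multiset.cons_erase h1
    have hs : μ.parts.sum = N + 1 := μ.parts_sum
    have : (1 ::ₘ μ.parts.erase 1).sum = N + 1 := by rw [this]; exact hs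
    rw [Multiset.sum_cons] at this
    omega
  · intro μ hμ
    refine Finset.mem_filter.mpr ⟨Finset.mem_univ _, fun i hi => ?_⟩
    exact (Finset.mem_filter.mp (Finset.mem_filter.mp hμ).1).2 i (Multiset.mem_of_mem_erase hi)
  · intro ν hν
    refine Finset.mem_filter.mpr ⟨Finset.mem_filter.mpr ⟨Finset.mem_univ _, fun i hi => ?_⟩,
      Multiset.mem_cons_self 1 _⟩
    rcases Multiset.mem_cons.mp hi with rfl | h
    · exact ⟨0, rfl⟩
    · exact (Finset.mem_filter.mp hν).2 i h
  · intro μ hμ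
    apply Nat.Partition.ext
    exact Multiset.cons_erase (Finset.mem_filter.mp hμ).2
  · intro ν hν
    apply Nat.Partition.ext
    exact Multiset.erase_cons_head 1 ν.parts
  · intro μ hμ
    have h1 : 1 ∈ μ.parts := (Finset.mem_filter.mp hμ).2
    have hcard : Multiset.card (μ.parts.erase 1) = Multiset.card μ.parts - 1 :=
      Multiset.card_erase_of_mem h1
    have hc1 : 1 ≤ Multiset.card μ.parts := Multiset.card_pos_iff_exists_mem.mpr ⟨1, h1⟩
    have hcle : Multiset.card μ.parts ≤ N + 1 := parts_card_le _ μ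
    congr 1
    rw [hcard]
    omega

lemma uT_succ (N : ℕ) (h : (N + 1) % 3 ≠ 0) : uT (N + 1) = uT N := by
  rw [← sum_filter_one_mem N, uT, Finset.filter_true_of_mem (fun μ hμ => one_mem_parts hμ h)]

lemma part_fact {M : ℕ} {μ : Nat.Partition (3 * M)}
    (hμ : μ ∈ (terParts (3 * M)).filter (fun μ => 1 ∉ μ.parts)) :
    ∀ y ∈ μ.parts, 3 * (y / 3) = y ∧ 0 < y / 3 ∧ ∃ k, y / 3 = 3 ^ k := by
  intro y hy
  obtain ⟨hmem, hone⟩ := Finset.mem_filter.mp hμ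
  obtain ⟨k, rfl⟩ := (Finset.mem_filter.mp hmem).2 y hy
  have hk : k ≠ 0 := by rintro rfl; exact hone (by simpa using hy)
  obtain ⟨m, rfl⟩ := Nat.exists_eq_succ_of_ne_zero hk
  have h3 : (3:ℕ) ^ (m + 1) = 3 * 3 ^ m := by ring
  have hdiv : 3 ^ (m + 1) / 3 = 3 ^ m := by rw [h3]; exact Nat.mul_div_cancel_left _ (by norm_num)
  exact ⟨by rw [hdiv, ← h3], by rw [hdiv]; positivity, ⟨m, hdiv⟩⟩

lemma sum_filter_no_one (M : ℕ) :
    ∑ μ ∈ (terParts (3 * M)).filter (fun μ => 1 ∉ μ.parts),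
      (2:ℤ) ^ (3 * M - Multiset.card μ.parts) = 4 ^ M * uT M := by
  rw [uT, Finset.mul_sum]
  symm
  refine Finset.sum_bij'
    (i := fun ν _ => ⟨ν.parts.map (fun y => 3 * y),
      fun {i} hi => by
        obtain ⟨y, hy, rfl⟩ := Multiset.mem_map.mp hi
        have := ν.parts_pos hy; omega, by
        rw [Multiset.sum_map_mul_left]
        simp [ν.parts_sum]⟩)
    (j := fun μ hμ => ⟨μ.parts.map (fun y => y / 3),
      fun {i} hi => by
        obtain ⟨y, hy, rfl⟩ := Multiset.mem_map.mp hi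
        exact (part_fact hμ y hy).2.1, by
        have key : μ.parts.map (fun y => 3 * (y / 3)) = μ.parts.map id :=
          Multiset.map_congr rfl (fun y hy => (part_fact hμ y hy).1)
        have h2 : 3 * (μ.parts.map (fun y => y / 3)).sum = 3 * M := by
          rw [← Multiset.sum_map_mul_left]
          rw [key, Multiset.map_id, μ.parts_sum]
        omega⟩)
    ?_ ?_ ?_ ?_ ?_
  · intro ν _
    refine Finset.mem_filter.mpr ⟨Finset.mem_filter.mpr ⟨Finset.mem_univ _, fun i hi => ?_⟩, ?_⟩
    · obtain ⟨y, hy, rfl⟩ := Multiset.mem_map.mp hi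
      obtain ⟨k, rfl⟩ := (Finset.mem_filter.mp ‹ν ∈ terParts M›).2 y hy
      exact ⟨k + 1, by ring⟩
    · intro h1
      obtain ⟨y, hy, hy1⟩ := Multiset.mem_map.mp h1
      omega
  · intro μ hμ
    refine Finset.mem_filter.mpr ⟨Finset.mem_univ _, fun i hi => ?_⟩
    obtain ⟨y, hy, rfl⟩ := Multiset.mem_map.mp hi
    exact (part_fact hμ y hy).2.2
  · intro ν hν
    apply Nat.Partition.ext
    simp only [Multiset.map_map]
    rw [show ((fun y => y / 3) ∘ fun y => 3 * y) = id from funext fun y => by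
      simp [Nat.mul_div_cancel_left y (show 0 < 3 by norm_num)], Multiset.map_id]
  · intro μ hμ
    apply Nat.Partition.ext
    simp only [Multiset.map_map]
    calc Multiset.map ((fun y => 3 * y) ∘ fun y => y / 3) μ.parts
        = Multiset.map id μ.parts :=
          Multiset.map_congr rfl (fun y hy => (part_fact hμ y hy).1)
      _ = μ.parts := Multiset.map_id _
  · intro ν hν
    simp only [Multiset.card_map]
    have hple : Multiset.card ν.parts ≤ M := parts_card_le M ν
    rw [show (4:ℤ) ^ M = 2 ^ (2 * M) by rw [show (4:ℤ) = 2 ^ 2 by norm_num, ← pow_mul],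
      ← pow_add]
    congr 1
    omega

lemma uT_rec (n : ℕ) (hn : 1 ≤ n) : uT (3 * n) = uT (3 * n - 1) + 4 ^ n * uT n := by
  have hN : 3 * n - 1 + 1 = 3 * n := by omega
  have h1 := sum_filter_one_mem (3 * n - 1)
  rw [hN] at h1
  have h2 := sum_filter_no_one n
  have hsplit := Finset.sum_filter_add_sum_filter_not (terParts (3 * n))
    (fun μ => 1 ∈ μ.parts) (fun μ => (2:ℤ) ^ (3 * n - Multiset.card μ.parts))
  calc uT (3 * n) = ∑ μ ∈ terParts (3 * n), (2:ℤ) ^ (3 * n - Multiset.card μ.parts) := rfl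
    _ = _ + _ := hsplit.symm
    _ = uT (3 * n - 1) + 4 ^ n * uT n := by rw [h1, h2]

/-- `t(3n) = t(3n+1) = t(3n+2)` for every `n ≥ 0`, and
`t(3n) − t(3n−2) = 2^{2n}·t(n)` for every `n ≥ 1`. -/
theorem tT_blocks_and_recurrence :
    (∀ n : ℕ, tT (3 * n) = tT (3 * n + 1) ∧ tT (3 * n + 1) = tT (3 * n + 2)) ∧
    (∀ n : ℕ, 1 ≤ n → tT (3 * n) - tT (3 * n - 2) = 2 ^ (2 * n) * tT n) := by
  constructor
  · intro n
    rw [tT_eq_uT, tT_eq_uT, tT_eq_uT (3 * n + 2)]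
    constructor
    · exact (uT_succ (3 * n) (by omega)).symm
    · exact (uT_succ (3 * n + 1) (by omega)).symm
  · intro n hn
    rw [tT_eq_uT, tT_eq_uT, tT_eq_uT]
    have h1 : uT (3 * n - 1) = uT (3 * n - 2) := by
      have := uT_succ (3 * n - 2) (by omega)
      rw [show 3 * n - 2 + 1 = 3 * n - 1 by omega] at this
      exact this
    have h2 := uT_rec n hn
    rw [h2, h1]
    have : (4:ℤ) ^ n = 2 ^ (2 * n) := by
      rw [show (4:ℤ) = 2 ^ 2 by norm_num, ← pow_mul]
    rw [this]
    ring
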